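/- Bounded dual iterates of projected subgradient: Let (y^k) in R^m be defined by y^{k+1} = [y^k + γ(a_k x^k - d)]_+ with y^1 = 0, where γ > 0, ‖a_k‖_∞ ≤ ā, x^k ∈ [0,1] satisfies ⟨a_k x^k, y^k⟩ ≤ c̄, and d ∈ R^m satisfies 0 < d_lo ≤ d_i ≤ d̄ for all i. Then for all k, ‖y^k‖ ≤ m(ā+d̄)²γ/d_lo + √m(ā+d̄)γ + c̄/d_lo. -/

import Mathlib

open scoped RealInnerProductSpace

lemma euclid_norm_le_of_comp {m : ℕ} (v : EuclideanSpace ℝ (Fin m)) (C : ℝ) (hC : 0 ≤ C)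
    (h : ∀ i, |v i| ≤ C) : ‖v‖ ≤ Real.sqrt m * C := by
  rw [EuclideanSpace.norm_eq]
  rw [show Real.sqrt m * C = Real.sqrt (m * C^2) by
    rw [Real.sqrt_mul (Nat.cast_nonneg m), Real.sqrt_sq hC]]
  apply Real.sqrt_le_sqrt
  calc ∑ i, ‖v i‖ ^ 2 ≤ ∑ _i : Fin m, C ^ 2 := by
        apply Finset.sum_le_sum
        intro i _
        have := h i
        rw [Real.norm_eq_abs]
        nlinarith [abs_nonneg (v i)]
    _ = m * C ^ 2 := by simp [Finset.sum_const, mul_comm]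

lemma euclid_norm_le_sum {m : ℕ} (v : EuclideanSpace ℝ (Fin m)) (h : ∀ i, 0 ≤ v i) :
    ‖v‖ ≤ ∑ i, v i := by
  rw [EuclideanSpace.norm_eq]
  have hs : 0 ≤ ∑ i, v i := Finset.sum_nonneg (fun i _ => h i)
  rw [show ∑ i, v i = Real.sqrt ((∑ i, v i)^2) by rw [Real.sqrt_sq hs]]
  apply Real.sqrt_le_sqrt
  calc ∑ i, ‖v i‖ ^ 2 = ∑ i, v i ^ 2 := by
        apply Finset.sum_congr rfl; intro i _; rw [Real.norm_eq_abs, sq_abs]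
    _ ≤ (∑ i, v i) ^ 2 := Finset.sum_sq_le_sq_sum_of_nonneg (fun i _ => h i)

lemma euclid_pos_norm_le {m : ℕ} (v w : EuclideanSpace ℝ (Fin m))
    (hw : ∀ i, w i = max (v i) 0) : ‖w‖ ≤ ‖v‖ := by
  rw [EuclideanSpace.norm_eq w, EuclideanSpace.norm_eq v]
  apply Real.sqrt_le_sqrt
  apply Finset.sum_le_sum
  intro i _
  have h1 : |w i| ≤ |v i| := by
    rw [hw i]
    rcases le_or_gt (v i) 0 with h | h
    · rw [max_eq_right h]; simp [abs_nonneg]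
    · rw [max_eq_left h.le]
  simp only [Real.norm_eq_abs]
  nlinarith [abs_nonneg (w i)]

theorem dual_iterates_bounded {m : ℕ} (γ abar cbar dbar dlo : ℝ)
    (y : ℕ → EuclideanSpace ℝ (Fin m)) (a : ℕ → EuclideanSpace ℝ (Fin m))
    (x : ℕ → ℝ) (d : EuclideanSpace ℝ (Fin m))
    (hγ : 0 < γ) (habar : 0 ≤ abar) (hcbar : 0 ≤ cbar) (hdbar : 0 ≤ dbar)
    (hdlo : 0 < dlo)
    (hy1 : y 1 = 0)
    (hrec : ∀ k, y (k + 1) =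
      (WithLp.toLp 2 (fun i => max ((y k + γ • (x k • a k - d)) i) 0) : EuclideanSpace ℝ (Fin m)))
    (ha : ∀ k i, |a k i| ≤ abar)
    (hx : ∀ k, x k ∈ Set.Icc (0 : ℝ) 1)
    (hc : ∀ k, ⟪x k • a k, y k⟫ ≤ cbar)
    (hd : ∀ i, dlo ≤ d i ∧ d i ≤ dbar) :
    ∀ k, 1 ≤ k →
      ‖y k‖ ≤ m * (abar + dbar) ^ 2 * γ / dlo + Real.sqrt m * (abar + dbar) * γ
        + cbar / dlo := by
  set G := Real.sqrt m * (abar + dbar) with hGdef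
  have hG0 : 0 ≤ G := mul_nonneg (Real.sqrt_nonneg _) (by linarith)
  have hGsq : G ^ 2 = (m : ℝ) * (abar + dbar) ^ 2 := by
    rw [hGdef, mul_pow, Real.sq_sqrt (Nat.cast_nonneg m)]
  set B := (m : ℝ) * (abar + dbar) ^ 2 * γ / dlo + G * γ + cbar / dlo with hBdef
  have hmsq : (0:ℝ) ≤ (m : ℝ) * (abar + dbar) ^ 2 := by positivity
  have heq : (m : ℝ) * (abar + dbar) ^ 2 * γ / dlo = G ^ 2 * γ / dlo := by rw [hGsq]
  have hB0 : 0 ≤ B := by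
    rw [hBdef]
    have h1 : 0 ≤ (m : ℝ) * (abar + dbar) ^ 2 * γ / dlo := by positivity
    have h2 : 0 ≤ G * γ := mul_nonneg hG0 hγ.le
    have h3 : 0 ≤ cbar / dlo := div_nonneg hcbar hdlo.le
    linarith
  -- nonnegativity of iterates
  have hy_nonneg : ∀ k, 1 ≤ k → ∀ i, 0 ≤ y k i := by
    intro k hk i
    cases k with
    | zero => omega
    | succ j => rw [hrec j]; exact le_max_right _ _
  -- gradient bound
  have hg : ∀ k, ‖x k • a k - d‖ ≤ G := by
    intro k
    apply euclid_norm_le_of_comp _ _ (by linarith)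
    intro i
    have hv : (x k • a k - d) i = x k * a k i - d i := rfl
    rw [hv]
    obtain ⟨hx0, hx1⟩ := hx k
    have ha' := ha k i
    obtain ⟨hd1, hd2⟩ := hd i
    have h1 : |x k * a k i| ≤ abar := by
      rw [abs_mul, abs_of_nonneg hx0]
      calc x k * |a k i| ≤ 1 * abar := by
            apply mul_le_mul hx1 ha' (abs_nonneg _) zero_le_one
        _ = abar := one_mul _
    have h2 : |d i| ≤ dbar := by rw [abs_of_nonneg (by linarith)]; exact hd2
    calc |x k * a k i - d i| ≤ |x k * a k i| + |d i| := abs_sub _ _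
      _ ≤ abar + dbar := add_le_add h1 h2
  -- inner product with d lower bound
  have hdy : ∀ k, 1 ≤ k → dlo * ‖y k‖ ≤ ⟪d, y k⟫ := by
    intro k hk
    have hnn := hy_nonneg k hk
    have h1 : ⟪d, y k⟫ = ∑ i, d i * y k i := by
      rw [PiLp.inner_apply]
      simp [RCLike.inner_apply, conj_trivial, mul_comm]
    calc dlo * ‖y k‖ ≤ dlo * ∑ i, y k i :=
          mul_le_mul_of_nonneg_left (euclid_norm_le_sum _ hnn) hdlo.le
      _ = ∑ i, dlo * y k i := Finset.mul_sum _ _ _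
      _ ≤ ∑ i, d i * y k i :=
          Finset.sum_le_sum fun i _ => mul_le_mul_of_nonneg_right (hd i).1 (hnn i)
      _ = ⟪d, y k⟫ := h1.symm
  intro k hk
  induction k, hk using Nat.le_induction with
  | base => rw [hy1]; simpa using hB0
  | succ k hk ih =>
    have hnormv : ‖y (k + 1)‖ ≤ ‖y k + γ • (x k • a k - d)‖ := by
      rw [hrec k]
      exact euclid_pos_norm_le _ _ (fun i => rfl)
    rcases le_or_gt ‖y k‖ (G ^ 2 * γ / dlo + cbar / dlo) with hcase | hcase
    · have h1 : ‖y k + γ • (x k • a k - d)‖ ≤ ‖y k‖ + γ * G := by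
        calc ‖y k + γ • (x k • a k - d)‖ ≤ ‖y k‖ + ‖γ • (x k • a k - d)‖ :=
              norm_add_le _ _
          _ = ‖y k‖ + γ * ‖x k • a k - d‖ := by
              rw [norm_smul, Real.norm_eq_abs, abs_of_pos hγ]
          _ ≤ ‖y k‖ + γ * G := by
              have := hg k
              nlinarith
      rw [hBdef]
      linarith
    · -- descent case
      have hineq := norm_add_sq_real (y k) (γ • (x k • a k - d))
      have hinner : ⟪y k, γ • (x k • a k - d)⟫ = γ * ⟪x k • a k - d, y k⟫ := by
        rw [real_inner_smul_right, real_inner_comm]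
      have h2 : ⟪x k • a k - d, y k⟫ ≤ cbar - dlo * ‖y k‖ := by
        have hsub : ⟪x k • a k - d, y k⟫ = ⟪x k • a k, y k⟫ - ⟪d, y k⟫ :=
          inner_sub_left _ _ _
        have := hc k
        have := hdy k hk
        linarith
      have hgn : ‖γ • (x k • a k - d)‖ ^ 2 ≤ γ ^ 2 * G ^ 2 := by
        rw [norm_smul, Real.norm_eq_abs, abs_of_pos hγ, mul_pow]
        exact mul_le_mul_of_nonneg_left
          (pow_le_pow_left₀ (norm_nonneg _) (hg k) 2) (sq_nonneg γ)
      have hcase' : G ^ 2 * γ + cbar < ‖y k‖ * dlo := by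
        rw [← add_div] at hcase
        exact (div_lt_iff₀ hdlo).mp hcase
      have hB2 : ‖y k + γ • (x k • a k - d)‖ ^ 2 ≤ B ^ 2 := by
        have hmul := mul_le_mul_of_nonneg_left h2 hγ.le
        have h3 := mul_lt_mul_of_pos_left hcase' hγ
        have hy2B : ‖y k‖ ^ 2 ≤ B ^ 2 := pow_le_pow_left₀ (norm_nonneg _) ih 2
        linarith [hineq, hinner, hmul, hgn, h3, hy2B, mul_nonneg (sq_nonneg γ) (sq_nonneg G)]
      have hvB : ‖y k + γ • (x k • a k - d)‖ ≤ B :=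
        calc ‖y k + γ • (x k • a k - d)‖
            = Real.sqrt (‖y k + γ • (x k • a k - d)‖ ^ 2) :=
              (Real.sqrt_sq (norm_nonneg _)).symm
          _ ≤ Real.sqrt (B ^ 2) := Real.sqrt_le_sqrt hB2
          _ = B := Real.sqrt_sq hB0
      linarith
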